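/- Let X be an inner product space over ℂ, x, y ∈ X and a, A ∈ ℂ. Then the identity ‖x‖²·‖y‖² − |⟨x,y⟩|² = Re[(A·‖y‖² − ⟨x,y⟩)·(conj(⟨x,y⟩) − conj(a)·‖y‖²)] − ‖y‖²·Re⟨A•y − x, x − a•y⟩ holds. -/

import Mathlib

open scoped InnerProductSpace ComplexConjugate

theorem cbs_re_identity {X : Type*} [NormedAddCommGroup X]
    [InnerProductSpace ℂ X] (x y : X) (a A : ℂ) :
    ‖x‖ ^ 2 * ‖y‖ ^ 2 - ‖⟪y, x⟫_ℂ‖ ^ 2 =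
      ((A * (‖y‖ : ℂ) ^ 2 - ⟪y, x⟫_ℂ) *
        (conj ⟪y, x⟫_ℂ - conj a * (‖y‖ : ℂ) ^ 2)).re -
        ‖y‖ ^ 2 * (⟪x - a • y, A • y - x⟫_ℂ).re := by
  have hx : ⟪x, x⟫_ℂ = ((‖x‖ ^ 2 : ℝ) : ℂ) := by
    rw [inner_self_eq_norm_sq_to_K]; norm_cast
  have hy : ⟪y, y⟫_ℂ = ((‖y‖ ^ 2 : ℝ) : ℂ) := by
    rw [inner_self_eq_norm_sq_to_K]; norm_cast
  have hc : ⟪x, y⟫_ℂ = conj ⟪y, x⟫_ℂ := by rw [← inner_conj_symm]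
  simp only [inner_sub_left, inner_sub_right, inner_smul_left, inner_smul_right, hx, hy, hc,
    ← Complex.ofReal_pow,
    Complex.sq_norm, Complex.normSq_apply, Complex.sub_re, Complex.add_re, Complex.mul_re,
    Complex.mul_im, Complex.sub_im, Complex.add_im, Complex.conj_re, Complex.conj_im,
    Complex.ofReal_re, Complex.ofReal_im]
  ring
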